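/- arXiv:1612.03377 — 4 statements merged into one kernel-verified Lean document; each statement's English description precedes it below -/
import Mathlib

section
/- Let G : ℝ → ℝ be continuous, strictly increasing, satisfying G(x+2) = G(x)+2 for all x, G(x) ≥ x for all x, and G(x) = x if and only if x ∈ ℤ. Let g : ℝ/2ℤ → ℝ/2ℤ be the induced circle map g(π(x)) = π(G(x)). Then g is chain transitive: for every ε > 0 and every pair of points a, b ∈ ℝ/2ℤ there is an ε-chain from a to b. -/
open Filter Topology

/-- An ε-chain based notion: `f` is chain transitive if for every `ε > 0` and every
pair of points `a, b` there is a finite ε-chain `x₀ = a, …, x_n = b` (with `n ≥ 1`)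
such that `dist (f (x_i)) (x_{i+1}) < ε` for all `0 ≤ i ≤ n - 1`. -/
def ChainTransitive {X : Type*} [MetricSpace X] (f : X → X) : Prop :=
  ∀ ε > (0 : ℝ), ∀ a b : X, ∃ n ≥ 1, ∃ c : ℕ → X,
    c 0 = a ∧ c n = b ∧ ∀ i < n, dist (f (c i)) (c (i + 1)) < ε

section Aux

variable {X : Type*} [MetricSpace X]

/-- There is an ε-chain from `a` to `b` for `f`. -/
def HasChain (f : X → X) (ε : ℝ) (a b : X) : Prop :=
  ∃ n ≥ 1, ∃ c : ℕ → X, c 0 = a ∧ c n = b ∧ ∀ i < n, dist (f (c i)) (c (i + 1)) < ε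

lemma HasChain.single {f : X → X} {ε : ℝ} {a b : X} (h : dist (f a) b < ε) :
    HasChain f ε a b := by
  refine ⟨1, le_refl 1, fun i => if i = 0 then a else b, by simp, by simp, ?_⟩
  intro i hi
  interval_cases i
  simpa using h

lemma HasChain.trans {f : X → X} {ε : ℝ} {a b c : X}
    (h1 : HasChain f ε a b) (h2 : HasChain f ε b c) : HasChain f ε a c := by
  obtain ⟨n, hn, u, hu0, hun, hustep⟩ := h1
  obtain ⟨m, hm, v, hv0, hvm, hvstep⟩ := h2
  refine ⟨n + m, by omega, fun i => if i ≤ n then u i else v (i - n), ?_, ?_, ?_⟩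
  · simp [hu0]
  · have hnm : ¬ (n + m ≤ n) := by omega
    simp only [if_neg hnm]
    rw [show n + m - n = m by omega, hvm]
  · intro i hi
    by_cases h : i < n
    · have h1' : i ≤ n := by omega
      have h2' : i + 1 ≤ n := by omega
      simpa only [if_pos h1', if_pos h2'] using hustep i h
    · have hin : ¬ (i + 1 ≤ n) := by omega
      have key : (if i ≤ n then u i else v (i - n)) = v (i - n) := by
        by_cases hn' : i ≤ n
        · have hie : i = n := by omega
          subst hie
          simp [hun, hv0]
        · simp [hn']
      simp only [key, if_neg hin]
      rw [show i + 1 - n = (i - n) + 1 by omega]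
      exact hvstep (i - n) (by omega)

end Aux

lemma dist_pi_le (x y : ℝ) :
    dist ((x : ℝ) : AddCircle (2:ℝ)) ((y : ℝ) : AddCircle (2:ℝ)) ≤ |x - y| := by
  rw [dist_eq_norm, ← AddCircle.coe_sub]
  rw [AddCircle.norm_eq' 2 (by norm_num)]
  have h := round_le (2⁻¹ * (x - y)) 0
  rw [Int.cast_zero, sub_zero, abs_mul] at h
  calc 2 * |2⁻¹ * (x - y) - round (2⁻¹ * (x - y))| ≤ 2 * (|2⁻¹| * |x - y|) := by
        linarith
    _ = |x - y| := by rw [abs_of_pos (by norm_num : (0:ℝ) < 2⁻¹)]; ring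

set_option maxHeartbeats 2000000 in
/-- Let `G : ℝ → ℝ` be continuous, strictly increasing, with
`G (x + 2) = G x + 2`, `G x ≥ x`, and `G x = x` iff `x` is an integer. Then the
induced map `g` on the circle `ℝ/2ℤ` is chain transitive. -/
theorem stmt3 (G : ℝ → ℝ) (hcont : Continuous G) (hmono : StrictMono G)
    (hper : ∀ x : ℝ, G (x + 2) = G x + 2)
    (hge : ∀ x : ℝ, x ≤ G x)
    (hfix : ∀ x : ℝ, G x = x ↔ ∃ k : ℤ, x = (k : ℝ))
    (g : AddCircle (2 : ℝ) → AddCircle (2 : ℝ))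
    (hg : ∀ x : ℝ, g ((x : ℝ) : AddCircle (2 : ℝ)) = ((G x : ℝ) : AddCircle (2 : ℝ))) :
    ChainTransitive g := by
  -- integers are fixed
  have hfixInt : ∀ k : ℤ, G (k : ℝ) = (k : ℝ) := fun k => (hfix k).mpr ⟨k, rfl⟩
  -- G x ≤ ⌈x⌉
  have hGle : ∀ x : ℝ, G x ≤ (⌈x⌉ : ℝ) := by
    intro x
    calc G x ≤ G (⌈x⌉ : ℝ) := hmono.monotone (Int.le_ceil x)
      _ = (⌈x⌉ : ℝ) := hfixInt _
  -- iterates bounded by ceiling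
  have hiter_le : ∀ (x : ℝ) (n : ℕ), G^[n] x ≤ (⌈x⌉ : ℝ) := by
    intro x n
    induction n with
    | zero => simpa using Int.le_ceil x
    | succ n ih =>
      rw [Function.iterate_succ_apply']
      calc G (G^[n] x) ≤ G (⌈x⌉ : ℝ) := hmono.monotone ih
        _ = (⌈x⌉ : ℝ) := hfixInt _
  have hiter_mono : ∀ x : ℝ, Monotone fun n => G^[n] x := by
    intro x
    apply monotone_nat_of_le_succ
    intro n
    rw [Function.iterate_succ_apply']
    exact hge _
  -- the forward orbit converges to the ceiling
  have htendsto : ∀ x : ℝ, Tendsto (fun n => G^[n] x) atTop (𝓝 ((⌈x⌉ : ℤ) : ℝ)) := by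
    intro x
    have hbdd : BddAbove (Set.range fun n => G^[n] x) := by
      refine ⟨(⌈x⌉ : ℝ), ?_⟩
      rintro _ ⟨n, rfl⟩
      exact hiter_le x n
    have hlim := tendsto_atTop_ciSup (hiter_mono x) hbdd
    set L := ⨆ n, G^[n] x with hL
    have hGL : G L = L := by
      have h1 : Tendsto (fun n => G^[n+1] x) atTop (𝓝 L) :=
        hlim.comp (tendsto_add_atTop_nat 1)
      have h2 : Tendsto (fun n => G (G^[n] x)) atTop (𝓝 (G L)) :=
        (hcont.tendsto L).comp hlim
      have heq : (fun n => G (G^[n] x)) = fun n => G^[n+1] x :=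
        funext fun n => (Function.iterate_succ_apply' G n x).symm
      exact tendsto_nhds_unique (heq ▸ h2) h1
    obtain ⟨k, hk⟩ := (hfix L).mp hGL
    have hxL : x ≤ L := by
      have := le_ciSup hbdd 0
      simpa using this
    have hLle : L ≤ (⌈x⌉ : ℝ) := ciSup_le (hiter_le x)
    have hkc : (k : ℝ) = ((⌈x⌉ : ℤ) : ℝ) := by
      have h1 : (⌈x⌉ : ℤ) ≤ k := Int.ceil_le.mpr (hk ▸ hxL)
      have h2 : (k : ℝ) ≤ ((⌈x⌉ : ℤ) : ℝ) := hk ▸ hLle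
      have h2' : k ≤ (⌈x⌉ : ℤ) := by exact_mod_cast h2
      exact_mod_cast le_antisymm h2' h1
    rw [← hkc, ← hk]
    exact hlim
  -- surjectivity of G
  have hGle1 : ∀ x : ℝ, G x ≤ x + 1 := fun x => (hGle x).trans (Int.ceil_lt_add_one x).le
  have hsurj : Function.Surjective G := by
    apply hcont.surjective
    · exact tendsto_atTop_mono hge tendsto_id
    · exact tendsto_atBot_mono hGle1 (tendsto_atBot_add_const_right _ 1 tendsto_id)
  set H := Function.invFun G with hH
  have hGH : ∀ y : ℝ, G (H y) = y := fun y => Function.invFun_eq (hsurj y)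
  have hHG : ∀ x : ℝ, H (G x) = x := fun x => hmono.injective (hGH (G x))
  have hHmono : StrictMono H := by
    intro y y' h
    have : G (H y) < G (H y') := by rw [hGH, hGH]; exact h
    exact hmono.lt_iff_lt.mp this
  -- chain A : from any point to the ceiling of its lift
  have hchainA : ∀ ε > (0:ℝ), ∀ α : ℝ,
      HasChain g ε ((α : ℝ) : AddCircle (2:ℝ)) (((⌈α⌉ : ℤ) : ℝ) : AddCircle (2:ℝ)) := by
    intro ε hε α
    obtain ⟨N, hN⟩ := (Metric.tendsto_atTop.mp (htendsto α)) ε hε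
    refine ⟨N + 1, by omega,
      fun i => if i ≤ N then ((G^[i] α : ℝ) : AddCircle (2:ℝ))
               else (((⌈α⌉ : ℤ) : ℝ) : AddCircle (2:ℝ)), by simp, by simp, ?_⟩
    intro i hi
    dsimp only
    by_cases h : i < N
    · have h1 : i ≤ N := h.le
      have h2 : i + 1 ≤ N := h
      rw [if_pos h1, if_pos h2, hg, Function.iterate_succ_apply' G i α]
      simpa using hε
    · rw [if_pos (by omega : i ≤ N), if_neg (by omega : ¬ i + 1 ≤ N), hg]
      have hh := hN (i+1) (by omega)
      rw [Function.iterate_succ_apply' G i α, Real.dist_eq] at hh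
      exact lt_of_le_of_lt (dist_pi_le _ _) hh
  -- chain C : from an integer to any point just above it
  have hchainC : ∀ ε > (0:ℝ), ∀ (β : ℝ) (q : ℤ), (q : ℝ) < β → β < (q : ℝ) + 1 →
      HasChain g ε (((q : ℤ) : ℝ) : AddCircle (2:ℝ)) ((β : ℝ) : AddCircle (2:ℝ)) := by
    intro ε hε β q hq1 hq2
    set z : ℕ → ℝ := fun k => H^[k] β with hz
    have hz0 : z 0 = β := rfl
    have hzG : ∀ k, G (z (k+1)) = z k := by
      intro k
      show G (H^[k+1] β) = H^[k] β
      rw [Function.iterate_succ_apply']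
      exact hGH _
    have hHq : H ((q:ℤ):ℝ) = ((q:ℤ):ℝ) := by
      conv_lhs => rw [← hfixInt q]
      exact hHG _
    have hzq : ∀ k, ((q:ℤ):ℝ) < z k := by
      intro k
      induction k with
      | zero => exact hq1
      | succ k ih =>
        show ((q:ℤ):ℝ) < H^[k+1] β
        rw [Function.iterate_succ_apply']
        calc ((q:ℤ):ℝ) = H ((q:ℤ):ℝ) := hHq.symm
          _ < H (H^[k] β) := hHmono ih
    have hzanti : Antitone z := by
      apply antitone_nat_of_succ_le
      intro k
      show H^[k+1] β ≤ H^[k] β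
      rw [Function.iterate_succ_apply']
      calc H (H^[k] β) ≤ G (H (H^[k] β)) := hge _
        _ = H^[k] β := hGH _
    have hzbdd : BddBelow (Set.range z) := by
      refine ⟨((q:ℤ):ℝ), ?_⟩
      rintro _ ⟨k, rfl⟩
      exact (hzq k).le
    have hztend : Tendsto z atTop (𝓝 ((q:ℤ):ℝ)) := by
      have hlim := tendsto_atTop_ciInf hzanti hzbdd
      set L := ⨅ k, z k with hL
      have hGL : G L = L := by
        have h1 : Tendsto (fun k => z (k+1)) atTop (𝓝 L) :=
          hlim.comp (tendsto_add_atTop_nat 1)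
        have h2 : Tendsto (fun k => G (z (k+1))) atTop (𝓝 (G L)) :=
          (hcont.tendsto L).comp h1
        have heq : (fun k => G (z (k+1))) = fun k => z k := funext fun k => hzG k
        rw [heq] at h2
        exact tendsto_nhds_unique h2 hlim
      obtain ⟨j, hj⟩ := (hfix L).mp hGL
      have hqL : ((q:ℤ):ℝ) ≤ L := le_ciInf fun k => (hzq k).le
      have hLβ : L ≤ β := by
        have := ciInf_le hzbdd 0
        simpa [hz0] using this
      have hjq : (j : ℝ) = ((q:ℤ):ℝ) := by
        have h1 : q ≤ j := by exact_mod_cast hj ▸ hqL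
        have h2 : (j:ℝ) < (q:ℝ) + 1 := lt_of_le_of_lt (hj ▸ hLβ) hq2
        have h2' : j < q + 1 := by exact_mod_cast h2
        have : j = q := by omega
        exact_mod_cast this
      rw [← hjq, ← hj]
      exact hlim
    obtain ⟨N, hN⟩ := (Metric.tendsto_atTop.mp hztend) ε hε
    set k := max N 1 with hk
    have hk1 : 1 ≤ k := le_max_right _ _
    have hdistk : |((q:ℤ):ℝ) - z k| < ε := by
      have := hN k (le_max_left _ _)
      rw [Real.dist_eq, abs_sub_comm] at this
      exact this
    have chain1 : HasChain g ε (((q:ℤ):ℝ) : AddCircle (2:ℝ)) ((z k : ℝ) : AddCircle (2:ℝ)) := by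
      apply HasChain.single
      rw [hg, hfixInt q]
      exact lt_of_le_of_lt (dist_pi_le _ _) hdistk
    have chain2 : HasChain g ε ((z k : ℝ) : AddCircle (2:ℝ)) ((β : ℝ) : AddCircle (2:ℝ)) := by
      refine ⟨k, hk1, fun i => ((z (k - i) : ℝ) : AddCircle (2:ℝ)), by simp, by simp [hz0], ?_⟩
      intro i hi
      dsimp only
      have hsub : k - i = (k - (i+1)) + 1 := by omega
      rw [hg, hsub, hzG (k - (i+1))]
      simpa using hε
    exact chain1.trans chain2
  -- chain B : from an integer to the next integer
  have hchainB : ∀ ε > (0:ℝ), ∀ m : ℤ,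
      HasChain g ε (((m : ℤ) : ℝ) : AddCircle (2:ℝ)) ((((m+1 : ℤ)) : ℝ) : AddCircle (2:ℝ)) := by
    intro ε hε m
    set δ : ℝ := min ε 1 / 2 with hδdef
    have hδpos : 0 < δ := by
      apply div_pos _ (by norm_num)
      exact lt_min hε one_pos
    have hδε : δ < ε := by
      have : min ε 1 ≤ ε := min_le_left _ _
      rw [hδdef]; linarith
    have hδ1 : δ ≤ 1 := by
      have : min ε 1 ≤ 1 := min_le_right _ _
      rw [hδdef]; linarith
    have hceil : ⌈((m:ℤ):ℝ) + δ⌉ = m + 1 := by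
      rw [show ((m:ℤ):ℝ) + δ = δ + (m:ℤ) by ring, Int.ceil_add_intCast]
      have : ⌈δ⌉ = 1 := by
        rw [Int.ceil_eq_iff]
        constructor
        · simpa using hδpos
        · simpa using hδ1
      rw [this]
      ring
    have chain1 : HasChain g ε (((m:ℤ):ℝ) : AddCircle (2:ℝ))
        ((((m:ℤ):ℝ) + δ : ℝ) : AddCircle (2:ℝ)) := by
      apply HasChain.single
      rw [hg, hfixInt m]
      calc dist ((((m:ℤ):ℝ)) : AddCircle (2:ℝ)) ((((m:ℤ):ℝ) + δ : ℝ) : AddCircle (2:ℝ))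
          ≤ |((m:ℤ):ℝ) - (((m:ℤ):ℝ) + δ)| := dist_pi_le _ _
        _ = δ := by rw [show ((m:ℤ):ℝ) - (((m:ℤ):ℝ) + δ) = -δ by ring, abs_neg,
            abs_of_pos hδpos]
        _ < ε := hδε
    have chain2 := hchainA ε hε (((m:ℤ):ℝ) + δ)
    rw [hceil] at chain2
    exact chain1.trans chain2
  -- main argument
  intro ε hε a b
  induction a using QuotientAddGroup.induction_on with
  | H α =>
  induction b using QuotientAddGroup.induction_on with
  | H β =>
  show HasChain g ε ((α : ℝ) : AddCircle (2:ℝ)) ((β : ℝ) : AddCircle (2:ℝ))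
  set m : ℤ := ⌈α⌉ with hm
  set k : ℤ := ⌊((m:ℝ) + 2 - β)/2⌋ with hkdef
  set β' : ℝ := β + 2*k with hβ'def
  have hββ' : ((β' : ℝ) : AddCircle (2:ℝ)) = ((β : ℝ) : AddCircle (2:ℝ)) := by
    rw [hβ'def]
    have : (β + 2*(k:ℝ)) = β + (k : ℤ) • (2:ℝ) := by
      rw [zsmul_eq_mul]; ring
    rw [this, AddCircle.coe_add, AddCircle.coe_zsmul, AddCircle.coe_period, smul_zero, add_zero]
  have hklow := Int.floor_le (((m:ℝ) + 2 - β)/2)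
  have hkhigh := Int.lt_floor_add_one (((m:ℝ) + 2 - β)/2)
  rw [← hkdef] at hklow hkhigh
  have hlow : (m:ℝ) < β' := by rw [hβ'def]; linarith
  have hhigh : β' ≤ (m:ℝ) + 2 := by rw [hβ'def]; linarith
  have chainA := hchainA ε hε α
  rw [← hm] at chainA
  rw [← hββ']
  by_cases hint : ∃ j : ℤ, β' = (j : ℝ)
  · obtain ⟨j, hj⟩ := hint
    have hj1 : m < j := by exact_mod_cast hj ▸ hlow
    have hj2 : j ≤ m + 2 := by
      have : (j : ℝ) ≤ (m:ℝ) + 2 := hj ▸ hhigh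
      exact_mod_cast this
    rcases (by omega : j = m + 1 ∨ j = m + 2) with h | h
    · subst h
      rw [hj]
      exact chainA.trans (hchainB ε hε m)
    · subst h
      have : ((β' : ℝ) : AddCircle (2:ℝ)) = (((m:ℤ):ℝ) : AddCircle (2:ℝ)) := by
        rw [hj]
        rw [show (((m + 2 : ℤ)):ℝ) = ((m:ℤ):ℝ) + 2 by push_cast; ring]
        exact AddCircle.coe_add_period 2 ((m:ℤ):ℝ)
      rw [this]
      exact chainA
  · set q : ℤ := ⌊β'⌋ with hq
    have hq1 : (q : ℝ) < β' := by
      rcases lt_or_eq_of_le (Int.floor_le β') with h | h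
      · exact h
      · exact absurd ⟨q, h.symm⟩ hint
    have hq2 : β' < (q : ℝ) + 1 := Int.lt_floor_add_one β'
    have hmq : m ≤ q := Int.le_floor.mpr hlow.le
    have hqm : q ≤ m + 1 := by
      by_contra hcon
      push_neg at hcon
      have hcon2 : m + 2 ≤ q := by omega
      have : (m:ℝ) + 2 ≤ (q:ℝ) := by exact_mod_cast hcon2
      linarith
    rcases (by omega : q = m ∨ q = m + 1) with h | h
    · rw [h] at hq1 hq2
      exact chainA.trans (hchainC ε hε β' m hq1 hq2)
    · rw [h] at hq1 hq2
      exact chainA.trans ((hchainB ε hε m).trans (hchainC ε hε β' (m+1) hq1 hq2))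
end

section
/- Let G : ℝ → ℝ be continuous, strictly increasing, satisfying G(x+2) = G(x)+2 for all x, G(x) ≥ x for all x, and G(x) = x if and only if x ∈ ℤ. Let g : ℝ/2ℤ → ℝ/2ℤ be the induced circle map g(π(x)) = π(G(x)). Then g(π(0)) = π(0), g(π(1)) = π(1), and every point a ∈ ℝ/2ℤ with a ≠ π(0) and a ≠ π(1) is wandering: there is an open neighborhood U of a such that g^n(U) ∩ U = ∅ for all n ≥ 1. Consequently the non-wandering set of g is exactly {π(0), π(1)}. -/
open Filter Topology Function

/-- The non-wandering set of a map `f`: the set of points `x` such that every open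
neighborhood `U` of `x` satisfies `f^n(U) ∩ U ≠ ∅` for some `n ≥ 1`. -/
def NonWanderingSet {X : Type*} [TopologicalSpace X] (f : X → X) : Set X :=
  {x | ∀ U : Set X, IsOpen U → x ∈ U → ∃ n ≥ 1, (f^[n] '' U ∩ U).Nonempty}

private lemma iter_ge {G : ℝ → ℝ} (hge : ∀ x : ℝ, x ≤ G x) :
    ∀ n : ℕ, ∀ z : ℝ, z ≤ G^[n] z := by
  intro n
  induction n with
  | zero => intro z; simp
  | succ m ih =>
    intro z
    rw [Function.iterate_succ_apply]
    exact (hge z).trans (ih (G z))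

private lemma iter_mem {G : ℝ → ℝ} (hmono : StrictMono G) {c : ℝ}
    (hc : G c = c) (hc1 : G (c + 1) = c + 1) :
    ∀ n : ℕ, ∀ z ∈ Set.Ioo c (c + 1), G^[n] z ∈ Set.Ioo c (c + 1) := by
  intro n
  induction n with
  | zero => intro z hz; simpa using hz
  | succ m ih =>
    intro z hz
    rw [Function.iterate_succ_apply]
    refine ih (G z) ⟨?_, ?_⟩
    · rw [← hc]; exact hmono hz.1
    · rw [← hc1]; exact hmono hz.2

/-- Key real lemma: around a non-fixed point in `(c, c+1)` there is an interval
`(a, b)` whose forward iterates stay in `(b, c+1)`. -/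
private lemma key {G : ℝ → ℝ} (hcont : Continuous G) (hmono : StrictMono G)
    (hge : ∀ x : ℝ, x ≤ G x) {c x : ℝ}
    (hc : G c = c) (hc1 : G (c + 1) = c + 1) (hx : x ∈ Set.Ioo c (c + 1))
    (hGx : x < G x) :
    ∃ a b : ℝ, c < a ∧ a < x ∧ x < b ∧ b < c + 1 ∧
      ∀ n : ℕ, 1 ≤ n → ∀ y ∈ Set.Ioo a b, b < G^[n] y ∧ G^[n] y ∈ Set.Ioo c (c + 1) := by
  have hGx1 : G x < c + 1 := by rw [← hc1]; exact hmono hx.2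
  set b := (x + G x) / 2 with hb
  have hxb : x < b := by rw [hb]; linarith
  have hbG : b < G x := by rw [hb]; linarith
  have hbc1 : b < c + 1 := lt_of_lt_of_le hbG hGx1.le
  -- find a < x with c < a and b < G a
  have hev : ∀ᶠ y in 𝓝 x, b < G y ∧ y ∈ Set.Ioo c (c + 1) := by
    filter_upwards [(hcont.continuousAt (x := x)).eventually (eventually_gt_nhds hbG),
      isOpen_Ioo.eventually_mem hx] with y h1 h2
    exact ⟨h1, h2⟩
  obtain ⟨⟨l, u⟩, ⟨hlx, hxu⟩, hlu⟩ := (nhds_basis_Ioo x).eventually_iff.mp hev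
  set a := (l + x) / 2 with ha
  have hax : a < x := by rw [ha]; linarith
  have hla : l < a := by rw [ha]; linarith
  have haS := hlu ⟨hla, hax.trans hxu⟩
  refine ⟨a, b, haS.2.1, hax, hxb, hbc1, ?_⟩
  intro n hn y hy
  have hyI : y ∈ Set.Ioo c (c + 1) :=
    ⟨haS.2.1.trans hy.1, hy.2.trans hbc1⟩
  refine ⟨?_, iter_mem hmono hc hc1 n y hyI⟩
  obtain ⟨m, rfl⟩ := Nat.exists_eq_add_of_le hn
  rw [add_comm, Function.iterate_succ_apply]
  calc b < G a := haS.1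
    _ < G y := hmono hy.1
    _ ≤ G^[m] (G y) := iter_ge hge m (G y)

/-- Let `G : ℝ → ℝ` be continuous, strictly increasing, with
`G (x + 2) = G x + 2`, `G x ≥ x`, and `G x = x` iff `x ∈ ℤ`, and let `g` be the
induced map on `ℝ/2ℤ`. Then `g` fixes `π 0` and `π 1`, every other point is
wandering, and the non-wandering set of `g` is exactly `{π 0, π 1}`. -/
theorem stmt4 (G : ℝ → ℝ) (hcont : Continuous G) (hmono : StrictMono G)
    (hper : ∀ x : ℝ, G (x + 2) = G x + 2)
    (hge : ∀ x : ℝ, x ≤ G x)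
    (hfix : ∀ x : ℝ, G x = x ↔ ∃ k : ℤ, x = (k : ℝ))
    (g : AddCircle (2 : ℝ) → AddCircle (2 : ℝ))
    (hg : ∀ x : ℝ, g ((x : ℝ) : AddCircle (2 : ℝ)) = ((G x : ℝ) : AddCircle (2 : ℝ))) :
    g (((0 : ℝ) : AddCircle (2 : ℝ))) = ((0 : ℝ) : AddCircle (2 : ℝ)) ∧
    g (((1 : ℝ) : AddCircle (2 : ℝ))) = ((1 : ℝ) : AddCircle (2 : ℝ)) ∧
    (∀ a : AddCircle (2 : ℝ), a ≠ ((0 : ℝ) : AddCircle (2 : ℝ)) →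
      a ≠ ((1 : ℝ) : AddCircle (2 : ℝ)) →
      ∃ U : Set (AddCircle (2 : ℝ)), IsOpen U ∧ a ∈ U ∧
        ∀ n ≥ 1, g^[n] '' U ∩ U = ∅) ∧
    NonWanderingSet g =
      {((0 : ℝ) : AddCircle (2 : ℝ)), ((1 : ℝ) : AddCircle (2 : ℝ))} := by
  haveI : Fact ((0 : ℝ) < 2) := ⟨by norm_num⟩
  have hG0 : G 0 = 0 := (hfix 0).mpr ⟨0, by norm_num⟩
  have hG1 : G 1 = 1 := (hfix 1).mpr ⟨1, by norm_num⟩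
  have hG2 : G 2 = 2 := (hfix 2).mpr ⟨2, by norm_num⟩
  have hfix0 : g (((0 : ℝ) : AddCircle (2 : ℝ))) = ((0 : ℝ) : AddCircle (2 : ℝ)) := by
    rw [hg 0, hG0]
  have hfix1 : g (((1 : ℝ) : AddCircle (2 : ℝ))) = ((1 : ℝ) : AddCircle (2 : ℝ)) := by
    rw [hg 1, hG1]
  -- iterates of g on coe
  have hgn : ∀ n : ℕ, ∀ x : ℝ,
      g^[n] ((x : ℝ) : AddCircle (2 : ℝ)) = ((G^[n] x : ℝ) : AddCircle (2 : ℝ)) := by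
    intro n
    induction n with
    | zero => intro x; simp
    | succ m ih =>
      intro x
      rw [Function.iterate_succ_apply', Function.iterate_succ_apply', ih, hg]
  -- main wandering statement
  have main : ∀ a : AddCircle (2 : ℝ), a ≠ ((0 : ℝ) : AddCircle (2 : ℝ)) →
      a ≠ ((1 : ℝ) : AddCircle (2 : ℝ)) →
      ∃ U : Set (AddCircle (2 : ℝ)), IsOpen U ∧ a ∈ U ∧
        ∀ n ≥ 1, g^[n] '' U ∩ U = ∅ := by
    intro z hz0 hz1
    obtain ⟨x, hxI, rfl⟩ := AddCircle.eq_coe_Ico z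
    have hx0 : x ≠ 0 := by rintro rfl; exact hz0 rfl
    have hx1 : x ≠ 1 := by rintro rfl; exact hz1 rfl
    -- x ∈ (0,1) ∪ (1,2)
    have hcase : x ∈ Set.Ioo (0 : ℝ) 1 ∨ x ∈ Set.Ioo (1 : ℝ) 2 := by
      rcases lt_trichotomy x 1 with h | h | h
      · exact Or.inl ⟨lt_of_le_of_ne hxI.1 (Ne.symm hx0), h⟩
      · exact absurd h hx1
      · exact Or.inr ⟨h, hxI.2⟩
    have hGx : x < G x := by
      refine lt_of_le_of_ne (hge x) ?_
      intro h
      obtain ⟨k, rfl⟩ := (hfix x).mp h.symm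
      rcases hcase with ⟨h1, h2⟩ | ⟨h1, h2⟩
      · have : (0 : ℤ) < k := by exact_mod_cast h1
        have : (k : ℝ) ≥ 1 := by exact_mod_cast this
        linarith
      · have : (1 : ℤ) < k := by exact_mod_cast h1
        have : (k : ℝ) ≥ 2 := by exact_mod_cast this
        linarith
    -- get c ∈ {0,1} with x ∈ (c, c+1)
    obtain ⟨c, hc, hc1, hxcc, hcc2⟩ :
        ∃ c : ℝ, G c = c ∧ G (c + 1) = c + 1 ∧ x ∈ Set.Ioo c (c + 1) ∧
          Set.Ioo c (c + 1) ⊆ Set.Ico (0 : ℝ) (0 + 2) := by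
      rcases hcase with h | h
      · exact ⟨0, hG0, by simpa using hG1, by simpa using h,
          fun y hy => ⟨hy.1.le, by simpa using hy.2.trans (by norm_num : (0:ℝ)+1 < 0+2)⟩⟩
      · refine ⟨1, hG1, by norm_num [hG2], by rwa [show (1:ℝ)+1 = 2 by norm_num], ?_⟩
        intro y hy
        have h2 : y < (1:ℝ) + 1 := hy.2
        exact ⟨by linarith [hy.1], by linarith⟩
    obtain ⟨a, b, hca, hax, hxb, hbc1, hiter⟩ :=
      key hcont hmono hge hc hc1 hxcc hGx
    refine ⟨(↑) '' Set.Ioo a b, QuotientAddGroup.isOpenMap_coe _ isOpen_Ioo,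
      ⟨x, ⟨hax, hxb⟩, rfl⟩, ?_⟩
    intro n hn
    rw [Set.eq_empty_iff_forall_notMem]
    rintro w ⟨⟨w1, ⟨y, hy, rfl⟩, hw1⟩, ⟨y', hy', hw'⟩⟩
    rw [hgn n y] at hw1
    have h1 : G^[n] y ∈ Set.Ico (0 : ℝ) (0 + 2) := hcc2 (hiter n hn y hy).2
    have h2 : y' ∈ Set.Ico (0 : ℝ) (0 + 2) :=
      hcc2 ⟨hca.trans hy'.1, hy'.2.trans hbc1⟩
    have heq : G^[n] y = y' := by
      rw [← AddCircle.coe_eq_coe_iff_of_mem_Ico h1 h2, hw1, hw']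
    have : b < y' := heq ▸ (hiter n hn y hy).1
    exact absurd hy'.2 (not_lt.mpr this.le)
  refine ⟨hfix0, hfix1, main, ?_⟩
  ext z
  constructor
  · intro hz
    by_contra hmem
    simp only [Set.mem_insert_iff, Set.mem_singleton_iff, not_or] at hmem
    obtain ⟨U, hU, hzU, hUn⟩ := main z hmem.1 hmem.2
    obtain ⟨n, hn, hne⟩ := hz U hU hzU
    rw [hUn n hn] at hne
    exact hne.ne_empty rfl
  · intro hz U hU hzU
    refine ⟨1, le_refl 1, ?_⟩
    rcases hz with rfl | rfl
    · exact ⟨_, ⟨_, hzU, by simpa using hfix0⟩, hzU⟩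
    · exact ⟨_, ⟨_, hzU, by simpa using hfix1⟩, hzU⟩
end

section
/- Let (M, d) be a compact metric space, f : M → M a homeomorphism, and Λ ⊆ M a nonempty compact set with f(Λ) = Λ. Suppose that the restriction f|_Λ is chain transitive (for every ε > 0 and every a, b ∈ Λ there is an ε-chain from a to b all of whose points lie in Λ), and that both the stable set W^s(Λ) = {x ∈ M : dist(f^n(x), Λ) → 0 as n → ∞} and the unstable set W^u(Λ) = {x ∈ M : dist(f^{−n}(x), Λ) → 0 as n → ∞} are dense in M. Then f is chain transitive on M: for every ε > 0 and every pair of points a, b ∈ M there is an ε-chain from a to b. -/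
open Filter Topology Function Metric

private lemma chain_trans' {M : Type*} [MetricSpace M] (f : M → M) (ε : ℝ) {a b c : M}
    (h1 : ∃ n ≥ 1, ∃ p : ℕ → M, p 0 = a ∧ p n = b ∧ ∀ i < n, dist (f (p i)) (p (i+1)) < ε)
    (h2 : ∃ n ≥ 1, ∃ p : ℕ → M, p 0 = b ∧ p n = c ∧ ∀ i < n, dist (f (p i)) (p (i+1)) < ε) :
    ∃ n ≥ 1, ∃ p : ℕ → M, p 0 = a ∧ p n = c ∧ ∀ i < n, dist (f (p i)) (p (i+1)) < ε := by
  obtain ⟨n, hn, p, hp0, hpn, hps⟩ := h1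
  obtain ⟨m, hm, q, hq0, hqn, hqs⟩ := h2
  refine ⟨n + m, by omega, fun i => if i < n then p i else q (i - n), ?_, ?_, ?_⟩
  · simp only [if_pos (by omega : 0 < n)]; exact hp0
  · simp only [if_neg (by omega : ¬ n + m < n)]
    have : n + m - n = m := by omega
    rw [this]; exact hqn
  · intro i hi
    by_cases h1 : i + 1 < n
    · simp only [if_pos (by omega : i < n), if_pos h1]
      exact hps i (by omega)
    · by_cases h2 : i < n
      · -- i + 1 = n
        have hin : i + 1 = n := by omega
        simp only [if_pos h2, if_neg (by omega : ¬ i + 1 < n)]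
        have : i + 1 - n = 0 := by omega
        rw [this, hq0, ← hpn, ← hin]
        exact hps i (by omega)
      · simp only [if_neg h2, if_neg (by omega : ¬ i + 1 < n)]
        have : i + 1 - n = (i - n) + 1 := by omega
        rw [this]
        exact hqs (i - n) (by omega)

/-- Let `M` be a compact metric space, `f` a homeomorphism of `M`,
and `Λ ⊆ M` a nonempty compact invariant set (`f '' Λ = Λ`). If `f` restricted to
`Λ` is chain transitive (ε-chains inside `Λ`), and both the stable set
`{x : dist(f^n x, Λ) → 0}` and the unstable set `{x : dist(f^{-n} x, Λ) → 0}` are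
dense in `M`, then `f` is chain transitive on `M`. -/
theorem stmt8 {M : Type*} [MetricSpace M] [CompactSpace M]
    (f : M ≃ₜ M) (Λ : Set M) (hΛne : Λ.Nonempty) (hΛcpt : IsCompact Λ)
    (hΛinv : f '' Λ = Λ)
    (hchainΛ : ∀ ε > (0 : ℝ), ∀ a ∈ Λ, ∀ b ∈ Λ, ∃ n ≥ 1, ∃ c : ℕ → M,
      c 0 = a ∧ c n = b ∧ (∀ i ≤ n, c i ∈ Λ) ∧
      ∀ i < n, dist (f (c i)) (c (i + 1)) < ε)
    (hstable : Dense {x : M |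
      Tendsto (fun n : ℕ => infDist ((f : M → M)^[n] x) Λ) atTop (𝓝 0)})
    (hunstable : Dense {x : M |
      Tendsto (fun n : ℕ => infDist ((f.symm : M → M)^[n] x) Λ) atTop (𝓝 0)}) :
    ∀ ε > (0 : ℝ), ∀ a b : M, ∃ n ≥ 1, ∃ c : ℕ → M,
      c 0 = a ∧ c n = b ∧ ∀ i < n, dist (f (c i)) (c (i + 1)) < ε := by
  intro ε hε a b
  have hε2 : (0:ℝ) < ε / 2 := by linarith
  -- uniform continuity of f
  have hfu : UniformContinuous (f : M → M) :=
    CompactSpace.uniformContinuous_of_continuous f.continuous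
  obtain ⟨δ₀, hδ₀, hδ₀f⟩ := Metric.uniformContinuous_iff.mp hfu (ε/2) hε2
  set δ : ℝ := min δ₀ (ε/2) with hδdef
  have hδ : 0 < δ := lt_min hδ₀ hε2
  have hδε2 : δ ≤ ε/2 := min_le_right _ _
  have hδε : δ < ε := by linarith
  have hδf : ∀ u v : M, dist u v < δ → dist (f u) (f v) < ε/2 := fun u v h =>
    hδ₀f (lt_of_lt_of_le h (min_le_left _ _))
  -- pick x in the stable set near f a
  obtain ⟨x, hxball, hxst⟩ := Metric.dense_iff.mp hstable (f a) ε hε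
  rw [Metric.mem_ball] at hxball
  -- pick y in the unstable set near b
  obtain ⟨y, hyball, hyun⟩ := Metric.dense_iff.mp hunstable b δ hδ
  rw [Metric.mem_ball] at hyball
  -- forward iterate of x gets close to Λ
  obtain ⟨n, hnδ, hn1⟩ :=
    ((hxst.eventually (gt_mem_nhds hδ)).and (eventually_ge_atTop 1)).exists
  obtain ⟨p, hpΛ, hpd⟩ := (Metric.infDist_lt_iff hΛne).mp hnδ
  -- backward iterate of y gets close to Λ
  obtain ⟨m, hmδ, hm1⟩ :=
    ((hyun.eventually (gt_mem_nhds hδ)).and (eventually_ge_atTop 1)).exists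
  obtain ⟨q, hqΛ, hqd⟩ := (Metric.infDist_lt_iff hΛne).mp hmδ
  rw [dist_comm] at hqd
  -- chain 1 : a → x
  have C1 : ∃ n ≥ 1, ∃ c : ℕ → M, c 0 = a ∧ c n = x ∧
      ∀ i < n, dist (f (c i)) (c (i+1)) < ε := by
    refine ⟨1, le_refl _, fun i => if i = 0 then a else x, rfl, rfl, ?_⟩
    intro i hi
    interval_cases i
    simpa [dist_comm] using hxball
  -- chain 2 : x → p ∈ Λ
  have C2 : ∃ k ≥ 1, ∃ c : ℕ → M, c 0 = x ∧ c k = p ∧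
      ∀ i < k, dist (f (c i)) (c (i+1)) < ε := by
    refine ⟨n, hn1, fun i => if i < n then (f : M → M)^[i] x else p, ?_, ?_, ?_⟩
    · simp only [if_pos (show 0 < n by omega), Function.iterate_zero_apply]
    · simp only [if_neg (lt_irrefl n)]
    · intro i hi
      by_cases h : i + 1 < n
      · simp only [if_pos hi, if_pos h, ← Function.iterate_succ_apply' (f : M → M) i x]
        simpa using hε
      · have hin : i + 1 = n := by omega
        simp only [if_pos hi, if_neg (by omega : ¬ i + 1 < n)]
        have he : (f : M → M)^[n] x = f ((f : M → M)^[i] x) := by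
          rw [← hin, Function.iterate_succ_apply']
        rw [← he]
        exact lt_trans hpd hδε
  -- chain 3 : p → q inside Λ
  have C3 : ∃ k ≥ 1, ∃ c : ℕ → M, c 0 = p ∧ c k = q ∧
      ∀ i < k, dist (f (c i)) (c (i+1)) < ε := by
    obtain ⟨k, hk, c, h0, hk', _, hs⟩ := hchainΛ ε hε p hpΛ q hqΛ
    exact ⟨k, hk, c, h0, hk', hs⟩
  -- chain 4 : q → b via backward orbit of y
  have C4 : ∃ k ≥ 1, ∃ c : ℕ → M, c 0 = q ∧ c k = b ∧
      ∀ i < k, dist (f (c i)) (c (i+1)) < ε := by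
    set g : M → M := (f.symm : M → M) with hg
    have hfg : ∀ k : ℕ, f (g^[k+1] y) = g^[k] y := by
      intro k
      rw [Function.iterate_succ_apply' g k y]
      exact f.apply_symm_apply _
    refine ⟨m, hm1, fun i => if i = 0 then q else if i < m then g^[m - i] y else b,
      rfl, ?_, ?_⟩
    · simp only [if_neg (show ¬ m = 0 by omega), if_neg (lt_irrefl m)]
    · intro i hi
      by_cases h0 : i = 0
      · subst h0
        simp only [if_pos rfl]
        by_cases hm2 : 1 < m
        · simp only [if_neg (by omega : ¬ (1:ℕ) = 0), if_pos hm2]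
          have : g^[m - 1] y = f (g^[m] y) := by
            rw [← hfg (m-1), (by omega : m - 1 + 1 = m)]
          rw [this]
          exact lt_trans (hδf _ _ hqd) (by linarith)
        · have hm1' : m = 1 := by omega
          simp only [if_neg (by omega : ¬ (1:ℕ) = 0), if_neg (by omega : ¬ 1 < m)]
          have h1 : dist (f q) y < ε/2 := by
            have := hδf q (g^[m] y) hqd
            rwa [hm1', hfg 0, Function.iterate_zero_apply] at this
          calc dist (f q) b ≤ dist (f q) y + dist y b := dist_triangle _ _ _
            _ < ε/2 + ε/2 := by
                have : dist y b < ε/2 := lt_of_lt_of_le hyball hδε2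
                linarith
            _ = ε := by ring
      · simp only [if_neg h0, if_pos hi]
        by_cases h : i + 1 < m
        · simp only [if_neg (by omega : ¬ i + 1 = 0), if_pos h]
          have : m - i = (m - (i+1)) + 1 := by omega
          rw [this, hfg]
          simpa using hε
        · have hin : i + 1 = m := by omega
          simp only [if_neg (by omega : ¬ i + 1 = 0), if_neg (by omega : ¬ i + 1 < m)]
          have : m - i = 1 := by omega
          rw [this]
          have : f (g^[1] y) = y := by rw [hfg 0, Function.iterate_zero_apply]
          rw [this]
          exact lt_trans hyball hδε
  exact chain_trans' (f : M → M) ε C1 (chain_trans' _ ε C2 (chain_trans' _ ε C3 C4))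
end

section
/- Let X be a nonempty topological space, g : X → X a bijection, and for each x ∈ X let H_x : ℝ → ℝ be continuous, strictly increasing, with H_x(t+2) = H_x(t)+2 for all t, inducing a circle homeomorphism h_x of ℝ/2ℤ; define f : X × (ℝ/2ℤ) → X × (ℝ/2ℤ) by f(x, a) = (g(x), h_x(a)). Fix 0 < δ < 1/2, and suppose Λ₀ ⊆ X × π([−δ, 0]) and Λ₁ ⊆ X × π([1−δ, 1]) are closed sets with f(Λ₀) = Λ₀, f(Λ₁) = Λ₁, and such that for every x ∈ X and each i ∈ {0,1} the fiber intersection Λ_i ∩ ({x} × ℝ/2ℤ) is nonempty. Then, setting U = X × π((−1, −δ)) and V = X × π((0, 1−δ)), one has f^n(U) ∩ V = ∅ for all n ≥ 0. In particular f is not transitive. -/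
open Filter Topology Function

/-- Coe equality on `AddCircle 2`. -/
lemma stmt10_coe_eq (a b : ℝ) :
    ((a : AddCircle (2:ℝ)) = b) ↔ ∃ k : ℤ, b = a + 2 * k := by
  rw [QuotientAddGroup.eq_iff_sub_mem, AddSubgroup.mem_zmultiples_iff]
  constructor
  · rintro ⟨k, hk⟩
    exact ⟨-k, by simp only [zsmul_eq_mul] at hk; push_cast; linarith⟩
  · rintro ⟨k, hk⟩
    exact ⟨-k, by simp only [zsmul_eq_mul]; push_cast; linarith⟩

/-- Let `X` be a nonempty topological space, `g : X → X` a bijection,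
and for each `x` let `H x : ℝ → ℝ` be a continuous strictly increasing lift with
`H x (t + 2) = H x t + 2`, inducing a circle homeomorphism `h x` of `ℝ/2ℤ`; let
`f (x, a) = (g x, h x a)`. Fix `0 < δ < 1/2` and suppose `Λ₀ ⊆ X × π [-δ, 0]` and
`Λ₁ ⊆ X × π [1-δ, 1]` are closed `f`-invariant sets meeting every fiber. Then with
`U = X × π (-1, -δ)` and `V = X × π (0, 1-δ)` one has `f^[n] '' U ∩ V = ∅` for all
`n ≥ 0`; in particular `f` is not transitive. -/
theorem stmt10 {X : Type*} [TopologicalSpace X] [Nonempty X]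
    (g : X → X) (hg : Function.Bijective g)
    (H : X → ℝ → ℝ) (hcont : ∀ x, Continuous (H x)) (hmono : ∀ x, StrictMono (H x))
    (hper : ∀ x, ∀ t : ℝ, H x (t + 2) = H x t + 2)
    (h : X → AddCircle (2 : ℝ) → AddCircle (2 : ℝ))
    (hh : ∀ x, ∀ t : ℝ, h x ((t : ℝ) : AddCircle (2 : ℝ)) = ((H x t : ℝ) : AddCircle (2 : ℝ)))
    (f : X × AddCircle (2 : ℝ) → X × AddCircle (2 : ℝ))
    (hf : ∀ p : X × AddCircle (2 : ℝ), f p = (g p.1, h p.1 p.2))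
    (δ : ℝ) (hδ : 0 < δ ∧ δ < 1 / 2)
    (Λ₀ Λ₁ : Set (X × AddCircle (2 : ℝ)))
    (hΛ₀sub : Λ₀ ⊆ (Set.univ : Set X) ×ˢ
      ((fun t : ℝ => ((t : ℝ) : AddCircle (2 : ℝ))) '' Set.Icc (-δ) 0))
    (hΛ₁sub : Λ₁ ⊆ (Set.univ : Set X) ×ˢ
      ((fun t : ℝ => ((t : ℝ) : AddCircle (2 : ℝ))) '' Set.Icc (1 - δ) 1))
    (hΛ₀cl : IsClosed Λ₀) (hΛ₁cl : IsClosed Λ₁)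
    (hΛ₀inv : f '' Λ₀ = Λ₀) (hΛ₁inv : f '' Λ₁ = Λ₁)
    (hΛ₀fib : ∀ x : X, ∃ a : AddCircle (2 : ℝ), (x, a) ∈ Λ₀)
    (hΛ₁fib : ∀ x : X, ∃ a : AddCircle (2 : ℝ), (x, a) ∈ Λ₁) :
    (∀ n : ℕ, f^[n] '' ((Set.univ : Set X) ×ˢ
        ((fun t : ℝ => ((t : ℝ) : AddCircle (2 : ℝ))) '' Set.Ioo (-1) (-δ))) ∩
      ((Set.univ : Set X) ×ˢ
        ((fun t : ℝ => ((t : ℝ) : AddCircle (2 : ℝ))) '' Set.Ioo 0 (1 - δ))) = ∅) ∧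
    ¬ (∀ U V : Set (X × AddCircle (2 : ℝ)), IsOpen U → IsOpen V →
        U.Nonempty → V.Nonempty → ∃ n > 0, (f^[n] '' U ∩ V).Nonempty) := by
  obtain ⟨hδ0, hδhalf⟩ := hδ
  set π : ℝ → AddCircle (2 : ℝ) := fun t => ((t : ℝ) : AddCircle (2 : ℝ)) with hπdef
  have hcoe : ∀ a b : ℝ, (π a = π b) ↔ ∃ k : ℤ, b = a + 2 * k := fun a b => stmt10_coe_eq a b
  have hper2 : ∀ t : ℝ, π (t + 2) = π t := fun t => AddCircle.coe_add_period 2 t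
  set U : Set (X × AddCircle (2 : ℝ)) :=
    (Set.univ : Set X) ×ˢ (π '' Set.Ioo (-1) (-δ)) with hUdef
  set V : Set (X × AddCircle (2 : ℝ)) :=
    (Set.univ : Set X) ×ˢ (π '' Set.Ioo 0 (1 - δ)) with hVdef
  -- the forward invariant "gap" set
  set W : Set (X × AddCircle (2 : ℝ)) :=
    {p | ∃ s u t : ℝ, s ∈ Set.Icc (1 - δ) 1 ∧ u ∈ Set.Icc (2 - δ) 2 ∧
      (p.1, π s) ∈ Λ₁ ∧ (p.1, π u) ∈ Λ₀ ∧ t ∈ Set.Ioo s u ∧ p.2 = π t} with hWdef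
  -- U ⊆ W
  have hUW : U ⊆ W := by
    rintro ⟨x, a⟩ ⟨-, t₀, ht₀, hat⟩
    obtain ⟨a₁, ha₁⟩ := hΛ₁fib x
    obtain ⟨-, s, hs, hsa⟩ := hΛ₁sub ha₁
    obtain ⟨a₀, ha₀⟩ := hΛ₀fib x
    obtain ⟨-, u₀, hu₀, hua⟩ := hΛ₀sub ha₀
    refine ⟨s, u₀ + 2, t₀ + 2, hs, ⟨by linarith [hu₀.1], by linarith [hu₀.2]⟩, ?_, ?_, ?_, ?_⟩
    · rwa [hsa]
    · rw [hper2 u₀, hua]; exact ha₀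
    · exact ⟨by linarith [hs.2, ht₀.1], by linarith [hu₀.1, ht₀.2]⟩
    · rw [hper2 t₀, hat]
  -- f maps W into W
  have hWinv : ∀ p ∈ W, f p ∈ W := by
    rintro ⟨x, a⟩ ⟨s, u, t, hs, hu, hsΛ, huΛ, ht, hat⟩
    have hat' : a = π t := hat
    have hfs : (g x, π (H x s)) ∈ Λ₁ := by
      have := Set.mem_image_of_mem f hsΛ
      rw [hΛ₁inv, hf] at this
      simpa [hπdef, hh x s] using this
    have hfu : (g x, π (H x u)) ∈ Λ₀ := by
      have := Set.mem_image_of_mem f huΛ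
      rw [hΛ₀inv, hf] at this
      simpa [hπdef, hh x u] using this
    obtain ⟨-, s', hs', hs'eq⟩ := hΛ₁sub hfs
    obtain ⟨-, u'', hu'', hu''eq⟩ := hΛ₀sub hfu
    obtain ⟨k, hk⟩ := (hcoe s' (H x s)).1 hs'eq
    obtain ⟨m, hm⟩ := (hcoe u'' (H x u)).1 hu''eq
    -- H x u - H x s ∈ (0, 2)
    have hlt1 : H x s < H x u := hmono x (lt_trans ht.1 ht.2)
    have hlt2 : H x u < H x s + 2 := by
      have : u < s + 2 := by linarith [hu.2, hs.1]
      have := hmono x this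
      rwa [hper x s] at this
    -- conclude m - 1 = k
    have hkm : m - 1 = k := by
      have h1 : (-1 : ℝ) < ((m - 1 - k : ℤ) : ℝ) := by push_cast; nlinarith [hs'.1, hs'.2, hu''.1, hu''.2]
      have h2 : ((m - 1 - k : ℤ) : ℝ) < 1 := by push_cast; nlinarith [hs'.1, hs'.2, hu''.1, hu''.2]
      have h1' : (-1 : ℤ) < m - 1 - k := by exact_mod_cast h1
      have h2' : m - 1 - k < 1 := by exact_mod_cast h2
      omega
    refine ⟨s', u'' + 2, H x t - 2 * k, hs',
      ⟨by linarith [hu''.1], by linarith [hu''.2]⟩, ?_, ?_, ?_, ?_⟩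
    · rw [hf]; dsimp
      have : π s' = π (H x s) := hs'eq
      rw [this]; exact hfs
    · rw [hf]; dsimp
      have : π (u'' + 2) = π (H x u) := by
        rw [hper2 u'']; exact hu''eq
      rw [this]; exact hfu
    · have hts : H x s < H x t := hmono x ht.1
      have htu : H x t < H x u := hmono x ht.2
      constructor
      · nlinarith
      · have : (m : ℝ) - 1 = k := by exact_mod_cast hkm
        nlinarith
    · rw [hf]; dsimp; rw [hat', hh x t]
      exact ((hcoe (H x t - 2 * k) (H x t)).2 ⟨k, by ring⟩).symm
  -- W ∩ V = ∅
  have hWV : ∀ p ∈ W, p ∉ V := by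
    rintro ⟨x, a⟩ ⟨s, u, t, hs, hu, -, -, ht, hat⟩ ⟨-, t₂, ht₂, hat₂⟩
    have : π t = π t₂ := by rw [← hat, ← hat₂]
    obtain ⟨k, hk⟩ := (hcoe t t₂).1 this
    have h1 : (-1 : ℝ) < ((k : ℤ) : ℝ) := by push_cast; nlinarith [hs.1, hu.2, ht.1, ht.2, ht₂.1, ht₂.2]
    have h2 : ((k : ℤ) : ℝ) < 0 := by push_cast; nlinarith [hs.1, hu.2, ht.1, ht.2, ht₂.1, ht₂.2]
    have h1' : (-1 : ℤ) < k := by exact_mod_cast h1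
    have h2' : k < 0 := by exact_mod_cast h2
    omega
  -- iterates of U stay in W
  have main : ∀ n : ℕ, f^[n] '' U ⊆ W := by
    intro n
    induction n with
    | zero => simpa using hUW
    | succ n ih =>
      rw [Function.iterate_succ', Set.image_comp]
      rintro p ⟨q, hq, rfl⟩
      exact hWinv q (ih hq)
  have part1 : ∀ n : ℕ, f^[n] '' U ∩ V = ∅ := by
    intro n
    rw [Set.eq_empty_iff_forall_notMem]
    rintro p ⟨hpU, hpV⟩
    exact hWV p (main n hpU) hpV
  refine ⟨part1, ?_⟩
  intro htrans
  have hopen : IsOpenMap π := fun s hs => QuotientAddGroup.isOpenMap_coe s hs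
  have hUopen : IsOpen U := isOpen_univ.prod (hopen _ isOpen_Ioo)
  have hVopen : IsOpen V := isOpen_univ.prod (hopen _ isOpen_Ioo)
  have hUne : U.Nonempty := by
    refine ⟨(Classical.arbitrary X, π (-(1 + δ) / 2)), Set.mem_univ _,
      -(1 + δ) / 2, ⟨by linarith, by linarith⟩, rfl⟩
  have hVne : V.Nonempty := by
    refine ⟨(Classical.arbitrary X, π ((1 - δ) / 2)), Set.mem_univ _,
      (1 - δ) / 2, ⟨by linarith, by linarith⟩, rfl⟩
  obtain ⟨n, -, hne⟩ := htrans U V hUopen hVopen hUne hVne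
  rw [part1 n] at hne
  exact Set.not_nonempty_empty hne
end
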